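/- As x → -∞, the McN hazard rate satisfies h(x) ~ (c/(σ B(a,b))) (-(x-μ)/σ)^{1-ac} φ((x-μ)/σ)^{ac}, i.e., the ratio of the two sides tends to 1. -/

import Mathlib

open Real MeasureTheory Filter Topology

noncomputable def betaFn (a b : ℝ) : ℝ := ∫ t in (0:ℝ)..1, t ^ (a-1) * (1-t) ^ (b-1)

noncomputable def gaussPdf (x : ℝ) : ℝ := (Real.sqrt (2 * Real.pi))⁻¹ * Real.exp (-x^2/2)

noncomputable def stdNormCdf (x : ℝ) : ℝ := ∫ t in Set.Iic x, gaussPdf t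

noncomputable def mcNPdf (a b c μ σ x : ℝ) : ℝ :=
  (c / (betaFn a b * σ)) * gaussPdf ((x - μ)/σ)
    * stdNormCdf ((x - μ)/σ) ^ (a*c - 1)
    * (1 - stdNormCdf ((x - μ)/σ) ^ c) ^ (b - 1)

noncomputable def mcNCdf (a b c μ σ x : ℝ) : ℝ :=
  (1 / betaFn a b) * ∫ t in (0:ℝ)..(stdNormCdf ((x - μ)/σ) ^ c), t ^ (a-1) * (1-t) ^ (b-1)

noncomputable def mcNHazard (a b c μ σ x : ℝ) : ℝ :=
  mcNPdf a b c μ σ x / (1 - mcNCdf a b c μ σ x)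

section Aux
open Set

lemma gaussPdf_pos (x : ℝ) : 0 < gaussPdf x := by
  unfold gaussPdf
  positivity

lemma continuous_gaussPdf : Continuous gaussPdf := by
  unfold gaussPdf
  fun_prop

lemma integrable_gaussPdf : Integrable gaussPdf := by
  have h : Integrable (fun x : ℝ => Real.exp (-(1/2:ℝ) * x ^ 2)) := integrable_exp_neg_mul_sq (by norm_num)
  have := h.const_mul ((Real.sqrt (2 * Real.pi))⁻¹)
  refine this.congr ?_
  filter_upwards with x
  unfold gaussPdf
  ring_nf

lemma hasDerivAt_stdNormCdf (x : ℝ) : HasDerivAt stdNormCdf (gaussPdf x) x := by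
  have heq : ∀ y, stdNormCdf y = stdNormCdf 0 + ∫ t in (0:ℝ)..y, gaussPdf t := by
    intro y
    rw [← intervalIntegral.integral_Iic_sub_Iic (integrable_gaussPdf.integrableOn)
        (integrable_gaussPdf.integrableOn)]
    unfold stdNormCdf; ring
  have h1 : HasDerivAt (fun y => stdNormCdf 0 + ∫ t in (0:ℝ)..y, gaussPdf t) (gaussPdf x) x := by
    refine HasDerivAt.const_add _ ?_
    exact intervalIntegral.integral_hasDerivAt_right
      (continuous_gaussPdf.intervalIntegrable _ _)
      (continuous_gaussPdf.stronglyMeasurableAtFilter _ _)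
      continuous_gaussPdf.continuousAt
  exact h1.congr_of_eventuallyEq (Filter.Eventually.of_forall fun y => (heq y))

lemma stdNormCdf_nonneg (x : ℝ) : 0 ≤ stdNormCdf x :=
  setIntegral_nonneg measurableSet_Iic fun t _ => (gaussPdf_pos t).le

lemma stdNormCdf_pos (x : ℝ) : 0 < stdNormCdf x := by
  rw [stdNormCdf, setIntegral_pos_iff_support_of_nonneg_ae]
  · have : Function.support gaussPdf = Set.univ := by
      ext t; simp [Function.mem_support, (gaussPdf_pos t).ne']
    simp only [this, Set.univ_inter, Real.volume_Iic]
    exact ENNReal.zero_lt_top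
  · filter_upwards with t using (gaussPdf_pos t).le
  · exact integrable_gaussPdf.integrableOn

lemma tendsto_gaussPdf_atBot : Tendsto gaussPdf atBot (𝓝 0) := by
  have hsq : Tendsto (fun x : ℝ => x^2) atBot atTop := by
    have h : Tendsto (fun x : ℝ => -x) atBot atTop := tendsto_neg_atBot_atTop
    have := (tendsto_pow_atTop (n := 2) (by norm_num)).comp h
    exact this.congr fun x => by simp [Function.comp]
  have h1 : Tendsto (fun x : ℝ => -x^2/2) atBot atBot :=
    (tendsto_neg_atTop_atBot.comp hsq).atBot_div_const (by norm_num)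
  have := (Real.tendsto_exp_atBot.comp h1).const_mul ((Real.sqrt (2 * Real.pi))⁻¹)
  rw [mul_zero] at this
  exact this.congr fun x => by simp [gaussPdf, Function.comp]

lemma tendsto_stdNormCdf_atBot : Tendsto stdNormCdf atBot (𝓝 0) := by
  have hub : ∀ x : ℝ, x ≤ -2 → stdNormCdf x ≤ (Real.sqrt (2 * Real.pi))⁻¹ * Real.exp x := by
    intro x hx
    have hle : ∀ t ∈ Set.Iic x, gaussPdf t ≤ (Real.sqrt (2 * Real.pi))⁻¹ * Real.exp t := by
      intro t ht
      simp only [Set.mem_Iic] at ht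
      have ht2 : t ≤ -2 := ht.trans hx
      have : -t^2/2 ≤ t := by nlinarith
      exact mul_le_mul_of_nonneg_left (Real.exp_le_exp.2 this) (by positivity)
    calc stdNormCdf x ≤ ∫ t in Set.Iic x, (Real.sqrt (2 * Real.pi))⁻¹ * Real.exp t :=
          setIntegral_mono_on integrable_gaussPdf.integrableOn
            (((integrableOn_exp_Iic x).const_mul _)) measurableSet_Iic hle
      _ = (Real.sqrt (2 * Real.pi))⁻¹ * Real.exp x := by
          rw [MeasureTheory.integral_const_mul, integral_exp_Iic]
  have h0 : Tendsto (fun x : ℝ => (Real.sqrt (2 * Real.pi))⁻¹ * Real.exp x) atBot (𝓝 0) := by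
    simpa using (Real.tendsto_exp_atBot).const_mul ((Real.sqrt (2 * Real.pi))⁻¹)
  refine tendsto_of_tendsto_of_tendsto_of_le_of_le' tendsto_const_nhds h0 ?_ ?_
  · filter_upwards with x using stdNormCdf_nonneg x
  · filter_upwards [eventually_le_atBot (-2 : ℝ)] with x hx using hub x hx

lemma hasDerivAt_gaussPdf (x : ℝ) : HasDerivAt gaussPdf (-x * gaussPdf x) x := by
  have h : HasDerivAt (fun x : ℝ => -x^2/2) (-x) x := by
    have := ((hasDerivAt_pow 2 x).neg.div_const 2)
    simpa using this.congr_deriv (by push_cast; ring)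
  have := (h.exp).const_mul ((Real.sqrt (2 * Real.pi))⁻¹)
  refine this.congr_deriv ?_
  unfold gaussPdf; ring

lemma tendsto_gauss_div_neg_atBot :
    Tendsto (fun x => gaussPdf x * (-x)⁻¹) atBot (𝓝 0) := by
  have h1 : Tendsto (fun x : ℝ => (-x)⁻¹) atBot (𝓝 0) :=
    tendsto_inv_atTop_zero.comp tendsto_neg_atBot_atTop
  simpa using tendsto_gaussPdf_atBot.mul h1

lemma mills_upper {x : ℝ} (hx : x < 0) : stdNormCdf x ≤ gaussPdf x * (-x)⁻¹ := by
  set g : ℝ → ℝ := fun x => gaussPdf x * (-x)⁻¹ - stdNormCdf x with hg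
  have hderiv : ∀ y : ℝ, y < 0 → HasDerivAt g (gaussPdf y / y^2) y := by
    intro y hy
    have hy0 : y ≠ 0 := ne_of_lt hy
    have hne : -y ≠ 0 := neg_ne_zero.mpr hy0
    have h1 : HasDerivAt (fun x : ℝ => gaussPdf x / (-x))
        ((-y * gaussPdf y * (-y) - gaussPdf y * (-1)) / (-y)^2) y :=
      (hasDerivAt_gaussPdf y).div ((hasDerivAt_id y).neg) hne
    have h2 := h1.sub (hasDerivAt_stdNormCdf y)
    refine (h2.congr_deriv ?_).congr_of_eventuallyEq ?_
    · field_simp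
      ring
    · filter_upwards with z
      simp [hg, div_eq_mul_inv]
  have hmono : StrictMonoOn g (Set.Iio 0) := by
    refine strictMonoOn_of_deriv_pos (convex_Iio 0) ?_ ?_
    · intro y hy
      exact ((hderiv y hy).differentiableAt.continuousAt).continuousWithinAt
    · intro y hy
      rw [interior_Iio] at hy
      rw [(hderiv y hy).deriv]
      have := gaussPdf_pos y
      have : y ≠ 0 := ne_of_lt hy
      positivity
  have htend : Tendsto g atBot (𝓝 0) := by
    simpa [hg] using tendsto_gauss_div_neg_atBot.sub tendsto_stdNormCdf_atBot
  have h0 : 0 ≤ g x := by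
    refine le_of_tendsto htend ?_
    filter_upwards [eventually_le_atBot (x - 1)] with y hy
    exact (hmono (show y ∈ Set.Iio 0 from Set.mem_Iio.mpr (by linarith))
      (Set.mem_Iio.mpr hx) (by linarith)).le
  simp only [hg, sub_nonneg] at h0
  exact h0

lemma mills_lower (x : ℝ) : gaussPdf x * (-x) / (x^2+1) ≤ stdNormCdf x := by
  set g : ℝ → ℝ := fun x => stdNormCdf x - gaussPdf x * (-x) / (x^2+1) with hg
  have hderiv : ∀ y : ℝ, HasDerivAt g (2 * gaussPdf y / (y^2+1)^2) y := by
    intro y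
    have hne : y^2 + 1 ≠ 0 := by positivity
    have hn : HasDerivAt (fun x : ℝ => gaussPdf x * (-x))
        (-y * gaussPdf y * (-y) + gaussPdf y * (-1)) y :=
      (hasDerivAt_gaussPdf y).mul ((hasDerivAt_id y).neg)
    have hd : HasDerivAt (fun x : ℝ => x^2 + 1) (2*y) y := by
      simpa using (hasDerivAt_pow 2 y).add_const 1
    have h1 := hn.div hd hne
    have h2 := (hasDerivAt_stdNormCdf y).sub h1
    refine h2.congr_deriv ?_
    field_simp
    ring
  have hmono : StrictMono g := by
    refine strictMono_of_deriv_pos ?_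
    intro y
    rw [(hderiv y).deriv]
    have := gaussPdf_pos y
    positivity
  have htend : Tendsto g atBot (𝓝 0) := by
    have h2 : Tendsto (fun x : ℝ => gaussPdf x * (-x) / (x^2+1)) atBot (𝓝 0) := by
      have heq : ∀ x : ℝ, x ≤ -1 → gaussPdf x * (-x) / (x^2+1) = gaussPdf x * (-x)⁻¹ * (x^2/(x^2+1)) := by
        intro x hx
        have : x ≠ 0 := by linarith
        field_simp
      have hb : Tendsto (fun x : ℝ => x^2/(x^2+1)) atBot (𝓝 1) := by
        have h3 : Tendsto (fun x : ℝ => x^2 + 1) atBot atTop := by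
          have h : Tendsto (fun x : ℝ => -x) atBot atTop := tendsto_neg_atBot_atTop
          have := (tendsto_pow_atTop (n := 2) (by norm_num)).comp h
          exact (tendsto_atTop_add_const_right _ 1 (this.congr fun x => by simp [Function.comp]))
        have h4 : Tendsto (fun x : ℝ => 1 - (x^2+1)⁻¹) atBot (𝓝 1) := by
          simpa using (tendsto_const_nhds (x := (1:ℝ)) (f := atBot)).sub (tendsto_inv_atTop_zero.comp h3)
        refine h4.congr' ?_
        filter_upwards [eventually_le_atBot (-1 : ℝ)] with x hx
        have h5 : x^2 + 1 ≠ 0 := by positivity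
        field_simp
        ring
      have := tendsto_gauss_div_neg_atBot.mul hb
      rw [zero_mul] at this
      refine this.congr' ?_
      filter_upwards [eventually_le_atBot (-1 : ℝ)] with x hx
      exact (heq x hx).symm
    have := tendsto_stdNormCdf_atBot.sub h2
    rw [sub_zero] at this
    exact this
  have h0 : 0 ≤ g x := by
    refine le_of_tendsto htend ?_
    filter_upwards [eventually_le_atBot (x - 1)] with y hy
    exact (hmono (show y < x by linarith)).le
  simp only [hg, sub_nonneg] at h0
  exact h0

lemma tendsto_mills : Tendsto (fun x => stdNormCdf x * (-x) / gaussPdf x) atBot (𝓝 1) := by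
  have hb : Tendsto (fun x : ℝ => x^2/(x^2+1)) atBot (𝓝 1) := by
    have h3 : Tendsto (fun x : ℝ => x^2 + 1) atBot atTop := by
      have h : Tendsto (fun x : ℝ => -x) atBot atTop := tendsto_neg_atBot_atTop
      have := (tendsto_pow_atTop (n := 2) (by norm_num)).comp h
      exact (tendsto_atTop_add_const_right _ 1 (this.congr fun x => by simp [Function.comp]))
    have h4 : Tendsto (fun x : ℝ => 1 - (x^2+1)⁻¹) atBot (𝓝 1) := by
      simpa using (tendsto_const_nhds (x := (1:ℝ)) (f := atBot)).sub (tendsto_inv_atTop_zero.comp h3)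
    refine h4.congr' ?_
    filter_upwards [eventually_le_atBot (-1 : ℝ)] with x hx
    have h5 : x^2 + 1 ≠ 0 := by positivity
    field_simp
    ring
  refine tendsto_of_tendsto_of_tendsto_of_le_of_le' hb tendsto_const_nhds ?_ ?_
  · filter_upwards [eventually_lt_atBot (0 : ℝ)] with x hx
    have hgp := gaussPdf_pos x
    have hml := mills_lower x
    rw [div_le_iff₀ (by positivity)] at hml
    rw [div_le_div_iff₀ (by positivity) hgp]
    nlinarith [mul_le_mul_of_nonneg_left hml (neg_nonneg.mpr hx.le)]
  · filter_upwards [eventually_lt_atBot (0 : ℝ)] with x hx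
    have hgp := gaussPdf_pos x
    have hmu := mills_upper hx
    rw [div_le_one hgp]
    have hxpos : (0:ℝ) < -x := by linarith
    calc stdNormCdf x * (-x) ≤ gaussPdf x * (-x)⁻¹ * (-x) :=
          mul_le_mul_of_nonneg_right hmu hxpos.le
      _ = gaussPdf x := by
          rw [mul_assoc, inv_mul_cancel₀ (ne_of_gt hxpos), mul_one]

lemma betaIntegrand_intble_left {a b : ℝ} (ha : 0 < a) (hb : 0 < b) {u : ℝ}
    (hu0 : 0 ≤ u) (hu : u ≤ 1/2) :
    IntervalIntegrable (fun t => t ^ (a-1) * (1-t) ^ (b-1)) volume 0 u := by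
  refine (intervalIntegral.intervalIntegrable_rpow' (by linarith)).mul_continuousOn ?_
  refine ContinuousOn.rpow_const ?_ ?_
  · exact continuousOn_const.sub continuousOn_id
  · intro t ht
    rw [Set.uIcc_of_le hu0, Set.mem_Icc] at ht
    left
    have : t ≤ 1/2 := ht.2.trans hu
    intro h
    simp only [sub_eq_zero] at h
    linarith [h.symm]

lemma betaIntegrand_intble {a b : ℝ} (ha : 0 < a) (hb : 0 < b) :
    IntervalIntegrable (fun t : ℝ => t ^ (a-1) * (1-t) ^ (b-1)) volume 0 1 := by
  refine (betaIntegrand_intble_left ha hb (by norm_num) le_rfl).trans ?_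
  have h1 : IntervalIntegrable (fun t : ℝ => (1-t) ^ (b-1)) volume (1/2) 1 := by
    have := (intervalIntegral.intervalIntegrable_rpow' (r := b - 1) (a := 0) (b := 1/2)
      (by linarith)).comp_sub_left 1
    norm_num at this
    exact this.symm
  refine h1.continuousOn_mul ?_
  refine ContinuousOn.rpow_const continuousOn_id ?_
  intro t ht
  rw [Set.uIcc_of_le (by norm_num : (1/2:ℝ) ≤ 1), Set.mem_Icc] at ht
  left; intro h; rw [h] at ht; linarith [ht.1]

lemma betaFn_pos {a b : ℝ} (ha : 0 < a) (hb : 0 < b) : 0 < betaFn a b := by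
  refine intervalIntegral.intervalIntegral_pos_of_pos_on (betaIntegrand_intble ha hb) ?_ one_pos
  intro t ht
  have h1 : 0 < t := ht.1
  have h2 : 0 < 1 - t := by linarith [ht.2]
  positivity

lemma incBeta_le {a b : ℝ} (ha : 0 < a) (hb : 0 < b) {u : ℝ} (hu0 : 0 ≤ u) (hu : u ≤ 1/2) :
    0 ≤ (∫ t in (0:ℝ)..u, t ^ (a-1) * (1-t) ^ (b-1)) ∧
    (∫ t in (0:ℝ)..u, t ^ (a-1) * (1-t) ^ (b-1)) ≤ max 1 ((2:ℝ) ^ (1-b)) * u ^ a / a := by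
  set K := max 1 ((2:ℝ) ^ (1-b)) with hK
  have hKpos : 0 < K := lt_max_of_lt_left one_pos
  have hbd : ∀ t ∈ Set.Icc (0:ℝ) u, t ^ (a-1) * (1-t) ^ (b-1) ≤ K * t ^ (a-1) := by
    intro t ht
    have ht1 : 0 ≤ t := ht.1
    have ht2 : t ≤ 1/2 := ht.2.trans hu
    have h12 : (1:ℝ)/2 ≤ 1 - t := by linarith
    have hfac : (1-t) ^ (b-1) ≤ K := by
      rcases le_or_gt 1 b with h | h
      · refine le_trans ?_ (le_max_left _ _)
        exact Real.rpow_le_one (by linarith) (by linarith) (by linarith)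
      · refine le_trans ?_ (le_max_right _ _)
        have := Real.rpow_le_rpow_of_nonpos (by norm_num : (0:ℝ) < 1/2) h12 (by linarith : b - 1 ≤ 0)
        calc (1-t) ^ (b-1) ≤ ((1:ℝ)/2) ^ (b-1) := this
          _ = (2:ℝ) ^ (1-b) := by
            rw [show (1:ℝ)/2 = (2:ℝ)⁻¹ by norm_num,
              Real.inv_rpow (by norm_num : (0:ℝ) ≤ 2),
              ← Real.rpow_neg (by norm_num : (0:ℝ) ≤ 2), neg_sub]
    calc t ^ (a-1) * (1-t) ^ (b-1) ≤ t ^ (a-1) * K :=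
          mul_le_mul_of_nonneg_left hfac (Real.rpow_nonneg ht1 _)
      _ = K * t ^ (a-1) := mul_comm _ _
  constructor
  · refine intervalIntegral.integral_nonneg hu0 ?_
    intro t ht
    have ht1 : 0 ≤ t := ht.1
    have : 0 ≤ 1 - t := by have := ht.2.trans hu; linarith
    positivity
  · have hmono := intervalIntegral.integral_mono_on hu0
      (betaIntegrand_intble_left ha hb hu0 hu)
      ((intervalIntegral.intervalIntegrable_rpow' (by linarith : (-1:ℝ) < a - 1)).const_mul K)
      hbd
    refine hmono.trans ?_
    rw [intervalIntegral.integral_const_mul, integral_rpow (Or.inl (by linarith))]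
    rw [sub_add_cancel, Real.zero_rpow (ne_of_gt ha), sub_zero]
    rw [mul_div_assoc]

end Aux

/-- h(x) ~ (c/(σB(a,b))) (-(x-μ)/σ)^{1-ac} φ((x-μ)/σ)^{ac} as x → -∞. -/
theorem mcN_hazard_asymptotic_bot (a b c μ σ : ℝ)
    (ha : 0 < a) (hb : 0 < b) (hc : 0 < c) (hσ : 0 < σ) :
    Tendsto (fun x => mcNHazard a b c μ σ x
        / ((c / (σ * betaFn a b)) * (-((x - μ)/σ)) ^ (1 - a*c)
            * gaussPdf ((x - μ)/σ) ^ (a*c)))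
      atBot (𝓝 1) := by
  have hBpos := betaFn_pos ha hb
  have hz : Tendsto (fun x : ℝ => (x - μ)/σ) atBot atBot := by
    apply Tendsto.atBot_div_const hσ
    exact (tendsto_atBot_add_const_right _ (-μ) tendsto_id).congr
      fun x => (sub_eq_add_neg x μ).symm
  have hΦ : Tendsto (fun x => stdNormCdf ((x-μ)/σ)) atBot (𝓝 0) :=
    tendsto_stdNormCdf_atBot.comp hz
  have hM : Tendsto
      (fun x => stdNormCdf ((x-μ)/σ) * (-((x-μ)/σ)) / gaussPdf ((x-μ)/σ)) atBot (𝓝 1) :=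
    tendsto_mills.comp hz
  have hΦc : Tendsto (fun x => stdNormCdf ((x-μ)/σ) ^ c) atBot (𝓝 0) := by
    have := hΦ.rpow_const (Or.inr hc.le)
    rwa [Real.zero_rpow (ne_of_gt hc)] at this
  have hS : Tendsto (fun x => (1 - stdNormCdf ((x-μ)/σ) ^ c) ^ (b-1)) atBot (𝓝 1) := by
    have h1 : Tendsto (fun x => 1 - stdNormCdf ((x-μ)/σ) ^ c) atBot (𝓝 1) := by
      simpa using ((tendsto_const_nhds (x := (1:ℝ)) (f := atBot)).sub hΦc)
    have := h1.rpow_const (p := b - 1) (Or.inl one_ne_zero)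
    rwa [Real.one_rpow] at this
  have hF : Tendsto (fun x => mcNCdf a b c μ σ x) atBot (𝓝 0) := by
    set K := max 1 ((2:ℝ) ^ (1-b)) with hK
    have hua : Tendsto (fun x => (stdNormCdf ((x-μ)/σ) ^ c) ^ a) atBot (𝓝 0) := by
      have := hΦc.rpow_const (Or.inr ha.le)
      rwa [Real.zero_rpow (ne_of_gt ha)] at this
    have hupper : Tendsto (fun x => (1 / betaFn a b) *
        (K * (stdNormCdf ((x-μ)/σ) ^ c) ^ a / a)) atBot (𝓝 0) := by
      have := (hua.const_mul K).div_const a |>.const_mul (1 / betaFn a b)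
      simpa using this
    refine tendsto_of_tendsto_of_tendsto_of_le_of_le' tendsto_const_nhds hupper ?_ ?_
    · filter_upwards [hΦc.eventually_le_const (by norm_num : (0:ℝ) < 1/2)] with x hx
      have hu0 : 0 ≤ stdNormCdf ((x-μ)/σ) ^ c := Real.rpow_nonneg (stdNormCdf_nonneg _) c
      rw [mcNCdf]
      exact mul_nonneg (by positivity) (incBeta_le ha hb hu0 hx).1
    · filter_upwards [hΦc.eventually_le_const (by norm_num : (0:ℝ) < 1/2)] with x hx
      have hu0 : 0 ≤ stdNormCdf ((x-μ)/σ) ^ c := Real.rpow_nonneg (stdNormCdf_nonneg _) c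
      rw [mcNCdf]
      exact mul_le_mul_of_nonneg_left (incBeta_le ha hb hu0 hx).2 (by positivity)
  have hDen : Tendsto (fun x => 1 - mcNCdf a b c μ σ x) atBot (𝓝 1) := by
    simpa using ((tendsto_const_nhds (x := (1:ℝ)) (f := atBot)).sub hF)
  have hmain : Tendsto (fun x =>
      (stdNormCdf ((x-μ)/σ) * (-((x-μ)/σ)) / gaussPdf ((x-μ)/σ)) ^ (a*c-1)
        * (1 - stdNormCdf ((x-μ)/σ) ^ c) ^ (b-1) / (1 - mcNCdf a b c μ σ x))
      atBot (𝓝 1) := by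
    have h1 := hM.rpow_const (p := a*c - 1) (Or.inl one_ne_zero)
    rw [Real.one_rpow] at h1
    have := (h1.mul hS).div hDen one_ne_zero
    simpa [Pi.div_def] using this
  refine hmain.congr' ?_
  filter_upwards [hz.eventually (eventually_lt_atBot (0:ℝ))] with x hx
  simp only [mcNHazard, mcNPdf]
  set z := (x - μ)/σ with hzdef
  have hzn : 0 < -z := by simpa using hx
  have hfp : 0 < gaussPdf z := gaussPdf_pos z
  have hΦp : 0 < stdNormCdf z := stdNormCdf_pos z
  rw [div_right_comm]
  congr 1
  have h1 : (stdNormCdf z * (-z) / gaussPdf z) ^ (a*c-1)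
      = stdNormCdf z ^ (a*c-1) * (-z) ^ (a*c-1) / gaussPdf z ^ (a*c-1) := by
    rw [Real.div_rpow (by positivity) hfp.le, Real.mul_rpow hΦp.le hzn.le]
  have h2 : gaussPdf z ^ (a*c) = gaussPdf z ^ (a*c-1) * gaussPdf z := by
    rw [← Real.rpow_add_one hfp.ne' (a*c-1)]
    congr 1
    ring
  have h3 : (-z) ^ (1-a*c) = ((-z) ^ (a*c-1))⁻¹ := by
    rw [show (1-a*c) = -(a*c-1) by ring, Real.rpow_neg hzn.le]
  rw [h1, h2, h3]
  have hz1 : (0:ℝ) < (-z) ^ (a*c-1) := Real.rpow_pos_of_pos hzn _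
  have hf1 : (0:ℝ) < gaussPdf z ^ (a*c-1) := Real.rpow_pos_of_pos hfp _
  field_simp
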